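/- arXiv:1906.03715 — 2 statements merged into one kernel-verified Lean document; each statement's English description precedes it below -/
import Mathlib

section
/- For Z as above and real λ, μ, the cross ratio cr([1,0], [-1,1], [0,1], Z[1,1]) equals e^λ e⁺ + e^μ e⁻, and hence its 'logarithm' λe⁺ + μe⁻ equals (λ+μ)/2 + τ(λ-μ)/2. -/
noncomputable section

/-- Model of the algebra `B = ℝ ⊕ τℝ` with `τ² = 1`, realized in the idempotent
basis: the element `a + τ b` corresponds to `(a + b, a - b) ∈ ℝ × ℝ`, with
componentwise ring operations. -/
abbrev BB : Type := ℝ × ℝ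

/-- The generator `τ` of `B`, satisfying `τ² = 1`. -/
def tauB : BB := (1, -1)

/-- The element `a + τ b` of `B`. -/
def bmk (a b : ℝ) : BB := (a + b, a - b)

/-- Conjugation `a + τ b ↦ a - τ b`. -/
def bconj (z : BB) : BB := (z.2, z.1)

/-- The square-norm `|a + τ b|² = a² - b²` (the real number such that
`z * bconj z = algebraMap ℝ BB (bnormSq z)`). -/
def bnormSq (z : BB) : ℝ := z.1 * z.2

/-- The idempotent `e⁺ = (1 + τ)/2`. -/
def eplus : BB := (1, 0)

/-- The idempotent `e⁻ = (1 - τ)/2`. -/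
def eminus : BB := (0, 1)

/-- Real part of `a + τ b`, namely `a`. -/
def bre (z : BB) : ℝ := (z.1 + z.2) / 2

/-- Imaginary part of `a + τ b`, namely `b`. -/
def bim (z : BB) : ℝ := (z.1 - z.2) / 2


/-- The matrix `A·e⁺ + A′·e⁻ ∈ M(2,B)` built from two real 2×2 matrices. -/
def bmat (A A' : Matrix (Fin 2) (Fin 2) ℝ) : Matrix (Fin 2) (Fin 2) BB :=
  A.map (fun x => algebraMap ℝ BB x * eplus) +
    A'.map (fun x => algebraMap ℝ BB x * eminus)

/-- `Z = diag(e^{λ/2}, e^{-λ/2})·e⁺ + diag(e^{μ/2}, e^{-μ/2})·e⁻`. -/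
def zmat (l m : ℝ) : Matrix (Fin 2) (Fin 2) BB :=
  bmat (Matrix.diagonal ![Real.exp (l / 2), Real.exp (-l / 2)])
    (Matrix.diagonal ![Real.exp (m / 2), Real.exp (-m / 2)])

/-- The action of a matrix over `B` on homogeneous coordinates. -/
def mobAct (A : Matrix (Fin 2) (Fin 2) BB) (p : BB × BB) : BB × BB :=
  (A 0 0 * p.1 + A 0 1 * p.2, A 1 0 * p.1 + A 1 1 * p.2)

/-- The "determinant" `x_p y_q - x_q y_p` of two points in homogeneous
coordinates over `B`. -/
def pdet (p q : BB × BB) : BB := p.1 * q.2 - q.1 * p.2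

/-- The cross ratio
`cr(p₁,p₂,p₃,p₄) = (x₂y₁-x₁y₂)(x₄y₃-x₃y₄)·((x₁y₄-x₄y₁)(x₂y₃-x₃y₂))⁻¹`. -/
def crossRatio (p₁ p₂ p₃ p₄ : BB × BB) : BB :=
  pdet p₂ p₁ * pdet p₄ p₃ * Ring.inverse (pdet p₁ p₄ * pdet p₂ p₃)

/-- `cr([1,0],[-1,1],[0,1],Z[1,1]) = e^λ e⁺ + e^μ e⁻`, whose logarithm
`λe⁺ + μe⁻` equals `(λ+μ)/2 + τ(λ-μ)/2`. -/
theorem stmt16 (l m : ℝ) :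
    crossRatio (1, 0) (-1, 1) (0, 1) (mobAct (zmat l m) (1, 1)) =
      Real.exp l • eplus + Real.exp m • eminus ∧
    l • eplus + m • eminus = bmk ((l + m) / 2) ((l - m) / 2) := by
  constructor
  · have key : ∀ z w : BB, z * w = 1 → Ring.inverse z = w := fun z w h => by
      have hu : IsUnit z := IsUnit.of_mul_eq_one (a := z) w h
      calc Ring.inverse z = Ring.inverse z * (z * w) := by rw [h, mul_one]
        _ = (Ring.inverse z * z) * w := by ring
        _ = w := by rw [Ring.inverse_mul_cancel _ hu, one_mul]
    simp only [crossRatio, pdet, mobAct, zmat, bmat, eplus, eminus, Matrix.add_apply,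
      Matrix.map_apply, Matrix.diagonal_apply, Matrix.cons_val', Matrix.cons_val_zero,
      Matrix.cons_val_one, Matrix.head_cons, Matrix.empty_val', Matrix.cons_val_fin_one]
    rw [key _ ((-Real.exp (l/2), -Real.exp (m/2))) (by
      simp [Prod.ext_iff, Prod.mul_def]
      constructor <;> (rw [← Real.exp_add]; norm_num; ring))]
    simp [Prod.ext_iff, Prod.mul_def, Prod.smul_def]
    constructor <;> (rw [← Real.exp_add]; norm_num)
  · simp [eplus, eminus, bmk, Prod.ext_iff]
    constructor <;> ring
end
end

section
/- The map H : C⁺ × S¹ × R → R × (R² \ {0}) × R defined by H(a + τb, e^{iθ}, c) = (b, |a+τb|·√(1 - tanh²c)·cos θ, |a+τb|·√(1 - tanh²c)·sin θ, |a+τb|·tanh c) is a homeomorphism, with inverse H⁻¹(x,y,z,w) = (√(x²+y²+z²+w²) + τx, (y+iz)/√(y²+z²), arctanh(w/√(y²+z²+w²))). -/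
noncomputable section

/-- The inverse hyperbolic tangent, `arctanh x = (1/2)·log((1+x)/(1-x))`. -/
def arctanh (x : ℝ) : ℝ := Real.log ((1 + x) / (1 - x)) / 2

/-- The positive cone `C⁺`: space-like elements of `B` with positive real
part. -/
def Cplus : Type := {z : BB // 0 < bre z ∧ 0 < bnormSq z}

instance : TopologicalSpace Cplus := instTopologicalSpaceSubtype

set_option maxHeartbeats 1000000

section Aux

lemma tanh_sq_lt_one (c : ℝ) : Real.tanh c ^ 2 < 1 := by
  have hc : 0 < Real.cosh c := Real.cosh_pos c
  rw [Real.tanh_eq_sinh_div_cosh, div_pow, div_lt_one (by positivity)]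
  nlinarith [Real.cosh_sq c]

lemma arctanh_tanh (c : ℝ) : arctanh (Real.tanh c) = c := by
  have hc : Real.cosh c ≠ 0 := (Real.cosh_pos c).ne'
  have h1 : 1 + Real.tanh c = Real.exp c / Real.cosh c := by
    rw [Real.tanh_eq_sinh_div_cosh, ← Real.cosh_add_sinh]; field_simp
  have h2 : 1 - Real.tanh c = Real.exp (-c) / Real.cosh c := by
    rw [Real.tanh_eq_sinh_div_cosh, ← Real.cosh_sub_sinh]; field_simp
  rw [arctanh, h1, h2, div_div_div_cancel_right₀, ← Real.exp_sub, Real.log_exp]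
  · ring
  · exact hc

lemma tanh_eq_exp (x : ℝ) :
    Real.tanh x = (Real.exp (2 * x) - 1) / (Real.exp (2 * x) + 1) := by
  have h := Real.exp_ne_zero x
  have h2 : Real.exp (2 * x) = Real.exp x * Real.exp x := by
    rw [two_mul, Real.exp_add]
  rw [Real.tanh_eq_sinh_div_cosh, Real.sinh_eq, Real.cosh_eq, Real.exp_neg, h2]
  have hpos : 0 < Real.exp x * Real.exp x + 1 := by positivity
  field_simp

lemma tanh_arctanh {t : ℝ} (h1 : -1 < t) (h2 : t < 1) :
    Real.tanh (arctanh t) = t := by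
  have h3 : (0:ℝ) < 1 - t := by linarith
  have h4 : (0:ℝ) < 1 + t := by linarith
  have hu : 0 < (1 + t) / (1 - t) := div_pos h4 h3
  rw [tanh_eq_exp, arctanh,
    show 2 * (Real.log ((1 + t) / (1 - t)) / 2) = Real.log ((1 + t) / (1 - t)) by ring,
    Real.exp_log hu]
  have hne : (1 + t) / (1 - t) + 1 ≠ 0 := by positivity
  rw [div_eq_iff hne]
  field_simp
  ring

lemma continuousAt_arctanh {t : ℝ} (h1 : -1 < t) (h2 : t < 1) :
    ContinuousAt arctanh t := by
  have h3 : (1:ℝ) - t ≠ 0 := by intro h; linarith [h]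
  have hu : (0:ℝ) < (1 + t) / (1 - t) := div_pos (by linarith) (by linarith)
  have hmain : ContinuousAt (fun x : ℝ => (1 + x) / (1 - x)) t :=
    ContinuousAt.div (by fun_prop) (by fun_prop) h3
  exact (hmain.log hu.ne').div_const 2

lemma continuous_tanh' : Continuous Real.tanh := by
  have h : Real.tanh = fun x => Real.sinh x / Real.cosh x :=
    funext fun x => Real.tanh_eq_sinh_div_cosh x
  rw [h]
  exact Real.continuous_sinh.div Real.continuous_cosh fun x => (Real.cosh_pos x).ne'

lemma m2_pos {v : ℝ × ℝ} (h : v ≠ 0) : 0 < v.1 ^ 2 + v.2 ^ 2 := by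
  rcases lt_or_eq_of_le (by positivity : (0:ℝ) ≤ v.1 ^ 2 + v.2 ^ 2) with h' | h'
  · exact h'
  · exfalso
    apply h
    have h1 : v.1 = 0 := by nlinarith [sq_nonneg v.1, sq_nonneg v.2]
    have hb : v.2 = 0 := by nlinarith [sq_nonneg v.1, sq_nonneg v.2]
    exact Prod.ext h1 hb

end Aux

section Main
open Real Complex

noncomputable def Hfwd : Cplus × Circle × ℝ → ℝ × {v : ℝ × ℝ // v ≠ 0} × ℝ :=
  fun p =>
    (bim p.1.1,
     ⟨(Real.sqrt (bnormSq p.1.1) * Real.sqrt (1 - Real.tanh p.2.2 ^ 2) * (p.2.1 : ℂ).re,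
       Real.sqrt (bnormSq p.1.1) * Real.sqrt (1 - Real.tanh p.2.2 ^ 2) * (p.2.1 : ℂ).im),
      by
        have hr : 0 < Real.sqrt (bnormSq p.1.1) := Real.sqrt_pos.2 p.1.2.2
        have hs : 0 < Real.sqrt (1 - Real.tanh p.2.2 ^ 2) :=
          Real.sqrt_pos.2 (by linarith [_root_.tanh_sq_lt_one p.2.2])
        intro h
        rw [Prod.ext_iff] at h
        obtain ⟨h1, h2⟩ := h
        have hre : ((p.2.1 : ℂ)).re = 0 := by
          rcases mul_eq_zero.1 h1 with h' | h'
          · exact absurd h' (by positivity)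
          · exact h'
        have him : ((p.2.1 : ℂ)).im = 0 := by
          rcases mul_eq_zero.1 h2 with h' | h'
          · exact absurd h' (by positivity)
          · exact h'
        exact Circle.coe_ne_zero p.2.1 (Complex.ext hre him)⟩,
     Real.sqrt (bnormSq p.1.1) * Real.tanh p.2.2)

noncomputable def Hinv : ℝ × {v : ℝ × ℝ // v ≠ 0} × ℝ → Cplus × Circle × ℝ :=
  fun q =>
    (⟨bmk (Real.sqrt (q.1 ^ 2 + (q.2.1 : ℝ × ℝ).1 ^ 2 + (q.2.1 : ℝ × ℝ).2 ^ 2 + q.2.2 ^ 2)) q.1,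
      by
        have hm : 0 < (q.2.1 : ℝ × ℝ).1 ^ 2 + (q.2.1 : ℝ × ℝ).2 ^ 2 := m2_pos q.2.1.2
        have hx : q.1 ^ 2 <
            q.1 ^ 2 + (q.2.1 : ℝ × ℝ).1 ^ 2 + (q.2.1 : ℝ × ℝ).2 ^ 2 + q.2.2 ^ 2 := by
          nlinarith [sq_nonneg q.2.2]
        have habs : |q.1| < Real.sqrt
            (q.1 ^ 2 + (q.2.1 : ℝ × ℝ).1 ^ 2 + (q.2.1 : ℝ × ℝ).2 ^ 2 + q.2.2 ^ 2) := by
          rw [← Real.sqrt_sq_eq_abs]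
          exact Real.sqrt_lt_sqrt (sq_nonneg _) hx
        have h1 := neg_abs_le q.1
        have h2 := le_abs_self q.1
        constructor
        · unfold bre bmk; dsimp only; linarith
        · unfold bnormSq bmk; dsimp only; nlinarith⟩,
     ⟨(((q.2.1 : ℝ × ℝ).1 : ℂ) + ((q.2.1 : ℝ × ℝ).2 : ℂ) * Complex.I) /
        (Real.sqrt ((q.2.1 : ℝ × ℝ).1 ^ 2 + (q.2.1 : ℝ × ℝ).2 ^ 2) : ℂ),
      by
        have hm : 0 < (q.2.1 : ℝ × ℝ).1 ^ 2 + (q.2.1 : ℝ × ℝ).2 ^ 2 := m2_pos q.2.1.2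
        have hs : 0 < Real.sqrt ((q.2.1 : ℝ × ℝ).1 ^ 2 + (q.2.1 : ℝ × ℝ).2 ^ 2) :=
          Real.sqrt_pos.2 hm
        show _ ∈ Metric.sphere (0 : ℂ) 1
        rw [mem_sphere_zero_iff_norm, norm_div,
          Complex.norm_add_mul_I, Complex.norm_real, Real.norm_eq_abs,
          abs_of_pos hs, div_self hs.ne']⟩,
     arctanh (q.2.2 / Real.sqrt ((q.2.1 : ℝ × ℝ).1 ^ 2 + (q.2.1 : ℝ × ℝ).2 ^ 2 + q.2.2 ^ 2)))

lemma Hleft : Function.LeftInverse Hinv Hfwd := by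
  rintro ⟨⟨z, hz1, hz2⟩, u, c⟩
  simp only [Hfwd, Hinv]
  have hu2 : (u : ℂ).re ^ 2 + (u : ℂ).im ^ 2 = 1 := by
    have := Circle.normSq_coe u
    rw [Complex.normSq_apply] at this
    nlinarith
  set r := Real.sqrt (bnormSq z) with hrdef
  have hr : 0 < r := Real.sqrt_pos.2 hz2
  have hr2 : r ^ 2 = bnormSq z := Real.sq_sqrt hz2.le
  have ht : Real.tanh c ^ 2 < 1 := _root_.tanh_sq_lt_one c
  set s := Real.sqrt (1 - Real.tanh c ^ 2) with hsdef
  have hs : 0 < s := Real.sqrt_pos.2 (by linarith)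
  have hs2 : s ^ 2 = 1 - Real.tanh c ^ 2 := Real.sq_sqrt (by linarith)
  have key : (r * s * (u : ℂ).re) ^ 2 + (r * s * (u : ℂ).im) ^ 2 = r ^ 2 * s ^ 2 := by
    nlinarith
  have hkey2 : (r * s * (u : ℂ).re) ^ 2 + (r * s * (u : ℂ).im) ^ 2
      + (r * Real.tanh c) ^ 2 = bnormSq z := by nlinarith [key, hs2, hr2]
  have hbb : bim z ^ 2 + bnormSq z = bre z ^ 2 := by unfold bre bim bnormSq; ring
  refine Prod.ext (Subtype.ext ?_) (Prod.ext (Circle.ext ?_) ?_)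
  · dsimp only
    rw [show bim z ^ 2 + (r * s * (u : ℂ).re) ^ 2 + (r * s * (u : ℂ).im) ^ 2
        + (r * Real.tanh c) ^ 2 = bre z ^ 2 by linarith, Real.sqrt_sq hz1.le]
    unfold bmk bre bim
    exact Prod.ext (by dsimp only; ring) (by dsimp only; ring)
  · dsimp only
    have hsq : Real.sqrt ((r * s * (u : ℂ).re) ^ 2 + (r * s * (u : ℂ).im) ^ 2) = r * s := by
      rw [key, ← mul_pow, Real.sqrt_sq (by positivity)]
    rw [hsq]
    have hrs : ((r * s : ℝ) : ℂ) ≠ 0 := by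
      rw [Complex.ofReal_ne_zero]; positivity
    rw [show ((r * s * (u : ℂ).re : ℝ) : ℂ) + ((r * s * (u : ℂ).im : ℝ) : ℂ) * Complex.I
        = ((r * s : ℝ) : ℂ) * ((u : ℂ).re + (u : ℂ).im * Complex.I) by push_cast; ring,
      mul_div_cancel_left₀ _ hrs, Complex.re_add_im]
  · dsimp only
    have hsq : Real.sqrt ((r * s * (u : ℂ).re) ^ 2 + (r * s * (u : ℂ).im) ^ 2
        + (r * Real.tanh c) ^ 2) = r := by
      rw [show (r * s * (u : ℂ).re) ^ 2 + (r * s * (u : ℂ).im) ^ 2 + (r * Real.tanh c) ^ 2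
          = r ^ 2 by nlinarith [key, hs2], Real.sqrt_sq hr.le]
    rw [hsq, mul_div_cancel_left₀ _ hr.ne', arctanh_tanh]

lemma Hright : Function.RightInverse Hinv Hfwd := by
  rintro ⟨x, ⟨⟨y, z⟩, hv⟩, w⟩
  simp only [Hfwd, Hinv]
  have hm : 0 < y ^ 2 + z ^ 2 := m2_pos hv
  set m := Real.sqrt (y ^ 2 + z ^ 2) with hmdef
  have hmpos : 0 < m := Real.sqrt_pos.2 hm
  have hm2 : m ^ 2 = y ^ 2 + z ^ 2 := Real.sq_sqrt hm.le
  set ρ := Real.sqrt (y ^ 2 + z ^ 2 + w ^ 2) with hρdef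
  have hρpos : 0 < ρ := Real.sqrt_pos.2 (by nlinarith [sq_nonneg w])
  have hρ2 : ρ ^ 2 = y ^ 2 + z ^ 2 + w ^ 2 := Real.sq_sqrt (by nlinarith [sq_nonneg w])
  set a := Real.sqrt (x ^ 2 + y ^ 2 + z ^ 2 + w ^ 2) with hadef
  have ha2 : a ^ 2 = x ^ 2 + y ^ 2 + z ^ 2 + w ^ 2 := Real.sq_sqrt (by positivity)
  have hw : |w| < ρ := by
    rw [← Real.sqrt_sq_eq_abs]
    exact Real.sqrt_lt_sqrt (sq_nonneg _) (by nlinarith)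
  have hw1 : -1 < w / ρ := by
    rw [lt_div_iff₀ hρpos]; have := neg_abs_le w; linarith
  have hw2 : w / ρ < 1 := by
    rw [div_lt_one hρpos]; have := le_abs_self w; linarith
  have htanh : Real.tanh (arctanh (w / ρ)) = w / ρ := tanh_arctanh hw1 hw2
  have hbns : bnormSq (bmk a x) = y ^ 2 + z ^ 2 + w ^ 2 := by
    unfold bnormSq bmk; dsimp only; nlinarith
  have hbr : Real.sqrt (bnormSq (bmk a x)) = ρ := by rw [hbns, hρdef]
  have hss : Real.sqrt (1 - Real.tanh (arctanh (w / ρ)) ^ 2) = m / ρ := by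
    rw [htanh, show 1 - (w / ρ) ^ 2 = m ^ 2 / ρ ^ 2 by
        field_simp
        nlinarith [hm2, hρ2],
      Real.sqrt_div (sq_nonneg m), Real.sqrt_sq hmpos.le, Real.sqrt_sq hρpos.le]
  have hUre : ((((y : ℝ) : ℂ) + ((z : ℝ) : ℂ) * Complex.I) / ((m : ℝ) : ℂ)).re = y / m := by
    rw [Complex.div_ofReal_re]; simp
  have hUim : ((((y : ℝ) : ℂ) + ((z : ℝ) : ℂ) * Complex.I) / ((m : ℝ) : ℂ)).im = z / m := by
    rw [Complex.div_ofReal_im]; simp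
  refine Prod.ext ?_ (Prod.ext (Subtype.ext ?_) ?_)
  · dsimp only
    unfold bim bmk; dsimp only; ring
  · dsimp only
    rw [hbr, hss, hUre, hUim]
    refine Prod.ext ?_ ?_ <;> dsimp only <;> field_simp
  · dsimp only
    rw [hbr, htanh]
    field_simp

lemma Hfwd_continuous : Continuous Hfwd := by
  unfold Hfwd
  refine Continuous.prodMk ?_ (Continuous.prodMk (Continuous.subtype_mk ?_ _) ?_)
  · have : Continuous fun p : Cplus × Circle × ℝ => (p.1.1 : BB) :=
      continuous_subtype_val.comp continuous_fst
    unfold bim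
    fun_prop
  · have h1 : Continuous fun p : Cplus × Circle × ℝ => Real.sqrt (bnormSq p.1.1) := by
      unfold bnormSq
      apply Real.continuous_sqrt.comp
      fun_prop
    have h2 : Continuous fun p : Cplus × Circle × ℝ =>
        Real.sqrt (1 - Real.tanh p.2.2 ^ 2) := by
      apply Real.continuous_sqrt.comp
      have := continuous_tanh'
      fun_prop
    have h3 : Continuous fun p : Cplus × Circle × ℝ => (p.2.1 : ℂ) :=
      continuous_subtype_val.comp (continuous_fst.comp continuous_snd)
    have h4 : Continuous fun p : Cplus × Circle × ℝ => (p.2.1 : ℂ).re :=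
      Complex.continuous_re.comp h3
    have h5 : Continuous fun p : Cplus × Circle × ℝ => (p.2.1 : ℂ).im :=
      Complex.continuous_im.comp h3
    fun_prop
  · have h1 : Continuous fun p : Cplus × Circle × ℝ => Real.sqrt (bnormSq p.1.1) := by
      unfold bnormSq
      apply Real.continuous_sqrt.comp
      fun_prop
    have := continuous_tanh'
    fun_prop

lemma Hinv_continuous : Continuous Hinv := by
  unfold Hinv
  refine Continuous.prodMk (Continuous.subtype_mk ?_ _)
    (Continuous.prodMk (Continuous.subtype_mk (continuous_iff_continuousAt.2 fun q => ?_) _)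
      (continuous_iff_continuousAt.2 fun q => ?_))
  · unfold bmk
    have : Continuous fun q : ℝ × {v : ℝ × ℝ // v ≠ 0} × ℝ =>
        Real.sqrt (q.1 ^ 2 + (q.2.1 : ℝ × ℝ).1 ^ 2 + (q.2.1 : ℝ × ℝ).2 ^ 2 + q.2.2 ^ 2) := by
      apply Real.continuous_sqrt.comp
      have : Continuous fun q : ℝ × {v : ℝ × ℝ // v ≠ 0} × ℝ => (q.2.1 : ℝ × ℝ) :=
        continuous_subtype_val.comp (continuous_fst.comp continuous_snd)
      fun_prop
    fun_prop
  · have hm : 0 < (q.2.1 : ℝ × ℝ).1 ^ 2 + (q.2.1 : ℝ × ℝ).2 ^ 2 := m2_pos q.2.1.2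
    have hs : 0 < Real.sqrt ((q.2.1 : ℝ × ℝ).1 ^ 2 + (q.2.1 : ℝ × ℝ).2 ^ 2) :=
      Real.sqrt_pos.2 hm
    have hval : Continuous fun q : ℝ × {v : ℝ × ℝ // v ≠ 0} × ℝ => (q.2.1 : ℝ × ℝ) :=
      continuous_subtype_val.comp (continuous_fst.comp continuous_snd)
    apply ContinuousAt.div
    · apply Continuous.continuousAt
      have h1 : Continuous fun q : ℝ × {v : ℝ × ℝ // v ≠ 0} × ℝ =>
          ((q.2.1 : ℝ × ℝ).1 : ℂ) := Complex.continuous_ofReal.comp (continuous_fst.comp hval)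
      have h2 : Continuous fun q : ℝ × {v : ℝ × ℝ // v ≠ 0} × ℝ =>
          ((q.2.1 : ℝ × ℝ).2 : ℂ) := Complex.continuous_ofReal.comp (continuous_snd.comp hval)
      fun_prop
    · apply Continuous.continuousAt
      apply Complex.continuous_ofReal.comp
      apply Real.continuous_sqrt.comp
      fun_prop
    · rw [Complex.ofReal_ne_zero]
      exact hs.ne'
  · have hm : 0 < (q.2.1 : ℝ × ℝ).1 ^ 2 + (q.2.1 : ℝ × ℝ).2 ^ 2 := m2_pos q.2.1.2
    have hρpos : 0 < Real.sqrt ((q.2.1 : ℝ × ℝ).1 ^ 2 + (q.2.1 : ℝ × ℝ).2 ^ 2 + q.2.2 ^ 2) :=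
      Real.sqrt_pos.2 (by nlinarith [sq_nonneg q.2.2])
    set ρ := Real.sqrt ((q.2.1 : ℝ × ℝ).1 ^ 2 + (q.2.1 : ℝ × ℝ).2 ^ 2 + q.2.2 ^ 2) with hρdef
    have hρ2 : ρ ^ 2 = (q.2.1 : ℝ × ℝ).1 ^ 2 + (q.2.1 : ℝ × ℝ).2 ^ 2 + q.2.2 ^ 2 :=
      Real.sq_sqrt (by positivity)
    have hw : |q.2.2| < ρ := by
      rw [← Real.sqrt_sq_eq_abs]
      exact Real.sqrt_lt_sqrt (sq_nonneg _) (by nlinarith)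
    have hw1 : -1 < q.2.2 / ρ := by
      rw [lt_div_iff₀ hρpos]; have := neg_abs_le q.2.2; linarith
    have hw2 : q.2.2 / ρ < 1 := by
      rw [div_lt_one hρpos]; have := le_abs_self q.2.2; linarith
    have hval : Continuous fun q : ℝ × {v : ℝ × ℝ // v ≠ 0} × ℝ => (q.2.1 : ℝ × ℝ) :=
      continuous_subtype_val.comp (continuous_fst.comp continuous_snd)
    have hinner : ContinuousAt (fun q : ℝ × {v : ℝ × ℝ // v ≠ 0} × ℝ =>
        q.2.2 / Real.sqrt ((q.2.1 : ℝ × ℝ).1 ^ 2 + (q.2.1 : ℝ × ℝ).2 ^ 2 + q.2.2 ^ 2)) q := by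
      apply ContinuousAt.div
      · fun_prop
      · apply Continuous.continuousAt
        apply Real.continuous_sqrt.comp
        fun_prop
      · exact hρpos.ne'
    exact ContinuousAt.comp (g := arctanh) (x := q)
      (f := fun q : ℝ × {v : ℝ × ℝ // v ≠ 0} × ℝ =>
        q.2.2 / Real.sqrt ((q.2.1 : ℝ × ℝ).1 ^ 2 + (q.2.1 : ℝ × ℝ).2 ^ 2 + q.2.2 ^ 2))
      (continuousAt_arctanh hw1 hw2) hinner

end Main

noncomputable def Hhomeo : Cplus × Circle × ℝ ≃ₜ ℝ × {v : ℝ × ℝ // v ≠ 0} × ℝ where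
  toFun := Hfwd
  invFun := Hinv
  left_inv := Hleft
  right_inv := Hright
  continuous_toFun := Hfwd_continuous
  continuous_invFun := Hinv_continuous


/-- The map `H : C⁺ × S¹ × ℝ → ℝ × (ℝ²\{0}) × ℝ`,
`H(a+τb, e^{iθ}, c) = (b, |a+τb|√(1-tanh²c)cosθ, |a+τb|√(1-tanh²c)sinθ,
|a+τb|·tanh c)`, is a homeomorphism with inverse
`H⁻¹(x,y,z,w) = (√(x²+y²+z²+w²) + τx, (y+iz)/√(y²+z²),
arctanh(w/√(y²+z²+w²)))`. -/
theorem stmt17 :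
    ∃ H : Cplus × Circle × ℝ ≃ₜ ℝ × {v : ℝ × ℝ // v ≠ 0} × ℝ,
      (∀ (z : Cplus) (u : Circle) (c : ℝ),
        (H (z, u, c)).1 = bim z.1 ∧
        ((H (z, u, c)).2.1 : ℝ × ℝ) =
          (Real.sqrt (bnormSq z.1) * Real.sqrt (1 - Real.tanh c ^ 2) *
              (u : ℂ).re,
            Real.sqrt (bnormSq z.1) * Real.sqrt (1 - Real.tanh c ^ 2) *
              (u : ℂ).im) ∧
        (H (z, u, c)).2.2 = Real.sqrt (bnormSq z.1) * Real.tanh c) ∧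
      (∀ (x : ℝ) (v : {v : ℝ × ℝ // v ≠ 0}) (w : ℝ),
        ((H.symm (x, v, w)).1).1 =
          bmk (Real.sqrt (x ^ 2 + (v : ℝ × ℝ).1 ^ 2 + (v : ℝ × ℝ).2 ^ 2 +
            w ^ 2)) x ∧
        ((H.symm (x, v, w)).2.1 : ℂ) =
          (((v : ℝ × ℝ).1 : ℂ) + ((v : ℝ × ℝ).2 : ℂ) * Complex.I) /
            (Real.sqrt ((v : ℝ × ℝ).1 ^ 2 + (v : ℝ × ℝ).2 ^ 2) : ℂ) ∧
        (H.symm (x, v, w)).2.2 =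
          arctanh (w / Real.sqrt ((v : ℝ × ℝ).1 ^ 2 + (v : ℝ × ℝ).2 ^ 2 +
            w ^ 2))) := by
  refine ⟨Hhomeo, fun z u c => ⟨rfl, rfl, rfl⟩, fun x v w => ⟨rfl, rfl, rfl⟩⟩
end
end
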